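/- In a convex hull thrackle on points in convex position, if at least 3 convex hulls contain a common point p ∈ P, then two of them intersect exactly in {p}. -/

import Mathlib

open Finset

abbrev Pt : Type := ℝ × ℝ

/-- 2D cross product (determinant) of two vectors. -/
def cross2 (u v : Pt) : ℝ := u.1 * v.2 - u.2 * v.1

/-- The points of `P` are in general position: no three of them are collinear. -/
def GenPos (P : Finset Pt) : Prop :=
  ∀ a ∈ P, ∀ b ∈ P, ∀ c ∈ P, a ≠ b → a ≠ c → b ≠ c → ¬ Collinear ℝ ({a, b, c} : Set Pt)

/-- The points of `P` are in convex position. -/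
def ConvexPos (P : Finset Pt) : Prop :=
  ∀ x ∈ P, x ∉ convexHull ℝ (↑(P.erase x) : Set Pt)

/-- The convex hull of a finite point set. -/
def hull (S : Finset Pt) : Set Pt := convexHull ℝ (↑S : Set Pt)

/-- `C(𝒮)` is a convex hull thrackle on `P`: the sets are subsets of `P`, hulls are
pairwise distinct, no hull is contained in another, any two hulls intersect, and the
intersection of any three distinct hulls is contained in `P`. -/
def CHT (P : Finset Pt) (𝒮 : Finset (Finset Pt)) : Prop :=
  GenPos P ∧
  (∀ S ∈ 𝒮, S ⊆ P) ∧
  (∀ S ∈ 𝒮, ∀ T ∈ 𝒮, hull S = hull T → S = T) ∧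
  (∀ S ∈ 𝒮, ∀ T ∈ 𝒮, S ≠ T → ¬ hull S ⊆ hull T) ∧
  (∀ S ∈ 𝒮, ∀ T ∈ 𝒮, S ≠ T → (hull S ∩ hull T).Nonempty) ∧
  (∀ S ∈ 𝒮, ∀ T ∈ 𝒮, ∀ U ∈ 𝒮, S ≠ T → S ≠ U → T ≠ U →
    hull S ∩ hull T ∩ hull U ⊆ (↑P : Set Pt))

/- ### Auxiliary lemmas -/

/-- Points on the segment from `p` towards `q` inside a convex set. -/
lemma seg_mem {H : Set Pt} (hc : Convex ℝ H) {p q : Pt} (hp : p ∈ H) (hq : q ∈ H)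
    {t : ℝ} (h0 : 0 ≤ t) (h1 : t ≤ 1) : p + t • (q - p) ∈ H := by
  have h := hc hp hq (by linarith : (0:ℝ) ≤ 1 - t) h0 (by ring)
  have : (1 - t) • p + t • q = p + t • (q - p) := by module
  rwa [this] at h

/-- The auxiliary linear functional `g` (a rotation of `f`). -/
noncomputable def gfun (f : Pt →L[ℝ] ℝ) (d : Pt) : ℝ :=
  f (1, 0) * d.2 - f (0, 1) * d.1

lemma f_eval (f : Pt →L[ℝ] ℝ) (d : Pt) : f d = f (1, 0) * d.1 + f (0, 1) * d.2 := by
  have hd : d = d.1 • ((1:ℝ), (0:ℝ)) + d.2 • ((0:ℝ), (1:ℝ)) := by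
    ext <;> simp
  rw [hd, map_add, map_smul, map_smul]
  simp [smul_eq_mul]
  ring

lemma fg_inj {f : Pt →L[ℝ] ℝ} (hab : ¬ (f (1,0) = 0 ∧ f (0,1) = 0)) {x y : Pt}
    (hf : f x = f y) (hg : gfun f x = gfun f y) : x = y := by
  have hf' : f (1,0) * x.1 + f (0,1) * x.2 = f (1,0) * y.1 + f (0,1) * y.2 := by
    rw [← f_eval, ← f_eval]; exact hf
  unfold gfun at hg
  have habs : 0 < (f (1,0))^2 + (f (0,1))^2 := by
    rcases not_and_or.mp hab with h | h
    · have h1 : 0 < (f (1,0))^2 := by positivity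
      have h2 : 0 ≤ (f (0,1))^2 := sq_nonneg _
      linarith
    · have h1 : 0 < (f (0,1))^2 := by positivity
      have h2 : 0 ≤ (f (1,0))^2 := sq_nonneg _
      linarith
  have key1 : ((f (1,0))^2 + (f (0,1))^2) * (x.1 - y.1) = 0 := by
    linear_combination f (1,0) * hf' - f (0,1) * hg
  have key2 : ((f (1,0))^2 + (f (0,1))^2) * (x.2 - y.2) = 0 := by
    linear_combination f (0,1) * hf' + f (1,0) * hg
  have h1 : x.1 = y.1 := by
    rcases mul_eq_zero.mp key1 with h | h
    · linarith
    · linarith [sub_eq_zero.mp h]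
  have h2 : x.2 = y.2 := by
    rcases mul_eq_zero.mp key2 with h | h
    · linarith
    · linarith [sub_eq_zero.mp h]
  exact Prod.ext h1 h2

lemma f_comb (f : Pt →L[ℝ] ℝ) (α β : ℝ) (u w : Pt) :
    f (α • u + β • w) = α * f u + β * f w := by
  rw [map_add, map_smul, map_smul]; simp [smul_eq_mul]

lemma g_comb (f : Pt →L[ℝ] ℝ) (α β : ℝ) (u w : Pt) :
    gfun f (α • u + β • w) = α * gfun f u + β * gfun f w := by
  unfold gfun
  simp [Prod.fst_add, Prod.snd_add, Prod.smul_fst, Prod.smul_snd, smul_eq_mul]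
  ring

/-- If `v` is angularly between `u` and `w` (all in the open halfplane `f > 0`),
then `v` is a nonnegative combination of `u` and `w`. -/
lemma middle_comb {f : Pt →L[ℝ] ℝ} {u v w : Pt}
    (hu : 0 < f u) (hv : 0 < f v) (hw : 0 < f w)
    (h1 : gfun f u * f v ≤ gfun f v * f u)
    (h2 : gfun f v * f w ≤ gfun f w * f v) :
    ∃ α β : ℝ, 0 ≤ α ∧ 0 ≤ β ∧ v = α • u + β • w := by
  have hab : ¬ (f (1,0) = 0 ∧ f (0,1) = 0) := by
    rintro ⟨ha, hb⟩
    have heval := f_eval f u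
    rw [ha, hb] at heval
    simp at heval
    linarith
  have hfu0 : f u ≠ 0 := ne_of_gt hu
  have hD : 0 ≤ f u * gfun f w - gfun f u * f w := by
    nlinarith [mul_le_mul_of_nonneg_right h1 hw.le,
      mul_le_mul_of_nonneg_right h2 hu.le, mul_pos hu hw, hv]
  rcases eq_or_lt_of_le hD with hD0 | hDpos
  · -- degenerate: directions of u and w coincide, hence so does that of v
    have huv : gfun f v * f u ≤ gfun f u * f v := by
      nlinarith [mul_le_mul_of_nonneg_right h2 hu.le, hw, hu, hv]
    have heq : gfun f u * f v = gfun f v * f u := le_antisymm h1 huv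
    refine ⟨f v / f u, 0, by positivity, le_refl 0, ?_⟩
    apply fg_inj hab
    · rw [f_comb]
      field_simp
      ring
    · rw [g_comb]
      field_simp
      linear_combination - heq
  · have hD0 : f u * gfun f w - gfun f u * f w ≠ 0 := ne_of_gt hDpos
    refine ⟨(f v * gfun f w - gfun f v * f w) / (f u * gfun f w - gfun f u * f w),
            (f u * gfun f v - gfun f u * f v) / (f u * gfun f w - gfun f u * f w),
            div_nonneg (by nlinarith) hDpos.le, div_nonneg (by nlinarith) hDpos.le, ?_⟩
    apply fg_inj hab
    · rw [f_comb]
      rw [div_mul_eq_mul_div, div_mul_eq_mul_div, ← add_div, eq_div_iff hD0]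
      ring
    · rw [g_comb]
      rw [div_mul_eq_mul_div, div_mul_eq_mul_div, ← add_div, eq_div_iff hD0]
      ring

/-- One of three vectors in an open halfplane is a nonnegative combination of the
other two. -/
lemma one_is_middle {f : Pt →L[ℝ] ℝ} {u v w : Pt}
    (hu : 0 < f u) (hv : 0 < f v) (hw : 0 < f w) :
    (∃ α β : ℝ, 0 ≤ α ∧ 0 ≤ β ∧ v = α • u + β • w) ∨
    (∃ α β : ℝ, 0 ≤ α ∧ 0 ≤ β ∧ u = α • v + β • w) ∨
    (∃ α β : ℝ, 0 ≤ α ∧ 0 ≤ β ∧ w = α • u + β • v) := by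
  rcases le_total (gfun f u * f v) (gfun f v * f u) with huv | hvu
  · rcases le_total (gfun f v * f w) (gfun f w * f v) with hvw | hwv
    · exact Or.inl (middle_comb hu hv hw huv hvw)
    · rcases le_total (gfun f u * f w) (gfun f w * f u) with huw | hwu
      · exact Or.inr (Or.inr (middle_comb hu hw hv huw hwv))
      · obtain ⟨α, β, hα, hβ, h⟩ := middle_comb hw hu hv hwu huv
        exact Or.inr (Or.inl ⟨β, α, hβ, hα, by rw [h, add_comm]⟩)
  · rcases le_total (gfun f v * f w) (gfun f w * f v) with hvw | hwv
    · rcases le_total (gfun f u * f w) (gfun f w * f u) with huw | hwu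
      · exact Or.inr (Or.inl (middle_comb hv hu hw hvu huw))
      · obtain ⟨α, β, hα, hβ, h⟩ := middle_comb hv hw hu hvw hwu
        exact Or.inr (Or.inr ⟨β, α, hβ, hα, by rw [h, add_comm]⟩)
    · obtain ⟨α, β, hα, hβ, h⟩ := middle_comb hw hv hu hwv hvu
      exact Or.inl ⟨β, α, hβ, hα, by rw [h, add_comm]⟩

/-- Separating functional at an extreme point of `P`. -/
lemma extreme_sep {P : Finset Pt} (hconv : ConvexPos P) {p : Pt} (hp : p ∈ P)
    (hne : (P.erase p).Nonempty) :
    ∃ f : Pt →L[ℝ] ℝ, ∀ q ∈ convexHull ℝ (↑P : Set Pt), q ≠ p → f p < f q := by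
  have hclosed : IsClosed (convexHull ℝ (↑(P.erase p) : Set Pt)) :=
    ((P.erase p).finite_toSet.isCompact_convexHull (𝕜 := ℝ)).isClosed
  obtain ⟨f, u, hfp, hfb⟩ :=
    geometric_hahn_banach_point_closed (convex_convexHull ℝ _) hclosed (hconv p hp)
  refine ⟨f, ?_⟩
  intro q hq hqp
  have hPins : (↑P : Set Pt) = insert p (↑(P.erase p) : Set Pt) := by
    ext x
    simp only [Set.mem_insert_iff, Finset.coe_erase, Set.mem_diff, Finset.mem_coe,
      Set.mem_singleton_iff]
    constructor
    · intro hx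
      by_cases hxp : x = p
      · exact Or.inl hxp
      · exact Or.inr ⟨hx, hxp⟩
    · rintro (rfl | ⟨hx, _⟩)
      · exact hp
      · exact hx
  rw [hPins, convexHull_insert (Finset.coe_nonempty.mpr hne)] at hq
  rw [mem_convexJoin] at hq
  obtain ⟨x, hx, z, hz, hseg⟩ := hq
  rw [Set.mem_singleton_iff] at hx
  rw [hx] at hseg
  obtain ⟨a, b, ha, hb, hab, hq⟩ := hseg
  have hz' : u < f z := hfb z hz
  by_cases hb0 : b = 0
  · exfalso
    apply hqp
    rw [← hq, hb0]
    have ha1 : a = 1 := by linarith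
    rw [ha1]
    simp
  · have hbpos : 0 < b := lt_of_le_of_ne hb (Ne.symm hb0)
    have hfq : f q = a * f p + b * f z := by
      rw [← hq, map_add, map_smul, map_smul]; simp [smul_eq_mul]
    have hq' : f q - f p = b * (f z - f p) := by
      rw [hfq]; linear_combination f p * hab
    have hpos : 0 < b * (f z - f p) :=
      mul_pos hbpos (by linarith)
    linarith

/-- Key contradiction: if `q ∈ A ∩ C`, `q ≠ p`, and `q - p` is a nonnegative
combination of segment directions into `B`, then `A ∩ B ∩ C` is infinite. -/
lemma key_lemma {A B C : Set Pt} (cA : Convex ℝ A) (cB : Convex ℝ B) (cC : Convex ℝ C)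
    {p q d e : Pt} (hpA : p ∈ A) (hpB : p ∈ B) (hpC : p ∈ C)
    (hqA : q ∈ A) (hqC : q ∈ C) (hdB : p + d ∈ B) (heB : p + e ∈ B)
    {α β : ℝ} (hα : 0 ≤ α) (hβ : 0 ≤ β) (hcomb : q - p = α • d + β • e)
    (hqp : q ≠ p) (hfin : (A ∩ B ∩ C).Finite) : False := by
  have hqp' : q - p ≠ 0 := sub_ne_zero.mpr hqp
  have habpos : 0 < α + β := by
    rcases lt_or_eq_of_le (by linarith : (0:ℝ) ≤ α + β) with h | h
    · exact h
    · exfalso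
      have hα0 : α = 0 := by linarith
      have hβ0 : β = 0 := by linarith
      apply hqp'
      rw [hcomb, hα0, hβ0]
      simp
  set t₀ := min 1 (1 / (α + β)) with ht₀def
  have ht₀ : 0 < t₀ := lt_min one_pos (by positivity)
  have hsub : (fun t : ℝ => p + t • (q - p)) '' Set.Ioo 0 t₀ ⊆ A ∩ B ∩ C := by
    rintro _ ⟨t, ⟨ht0, ht1⟩, rfl⟩
    have ht1' : t ≤ 1 := le_of_lt (lt_of_lt_of_le ht1 (min_le_left _ _))
    have h' : t ≤ 1 / (α + β) := le_of_lt (lt_of_lt_of_le ht1 (min_le_right _ _))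
    have hts : t * (α + β) ≤ 1 := by
      have h2 := mul_le_mul_of_nonneg_right h' (le_of_lt habpos)
      rwa [one_div, inv_mul_cancel₀ (ne_of_gt habpos)] at h2
    refine ⟨⟨?_, ?_⟩, ?_⟩
    · exact seg_mem cA hpA hqA (le_of_lt ht0) ht1'
    · -- membership in B
      set s := t * (α + β) with hsdef
      have hs0 : 0 ≤ s := by positivity
      have hz1 : p + s • d ∈ B := by
        have h := seg_mem cB hpB hdB hs0 hts
        rwa [add_sub_cancel_left] at h
      have hz2 : p + s • e ∈ B := by
        have h := seg_mem cB hpB heB hs0 hts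
        rwa [add_sub_cancel_left] at h
      have hx := cB hz1 hz2 (div_nonneg hα (le_of_lt habpos))
        (div_nonneg hβ (le_of_lt habpos)) (by field_simp)
      have heq : (α / (α + β)) • (p + s • d) + (β / (α + β)) • (p + s • e)
          = p + t • (q - p) := by
        rw [hcomb, hsdef]
        have hne : α + β ≠ 0 := ne_of_gt habpos
        match_scalars <;> field_simp <;> ring
      rwa [heq] at hx
    · exact seg_mem cC hpC hqC (le_of_lt ht0) ht1'
  have hinj : Set.InjOn (fun t : ℝ => p + t • (q - p)) (Set.Ioo 0 t₀) := by
    intro t1 _ t2 _ h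
    simp only [add_right_inj] at h
    have hz : (t1 - t2) • (q - p) = 0 := by
      rw [sub_smul, h, sub_self]
    rcases smul_eq_zero.mp hz with h' | h'
    · linarith [sub_eq_zero.mp (by linarith [h'] : t1 - t2 = 0)]
    · exact absurd h' hqp'
  have hIoo : (Set.Ioo (0:ℝ) t₀).Infinite := by
    rw [← Set.infinite_coe_iff]
    exact Set.Ioo.infinite ht₀
  exact (hIoo.image hinj) (hfin.subset hsub)

lemma exists_ne_of_ne_singleton {A : Set Pt} {p : Pt} (hpA : p ∈ A) (hne : A ≠ {p}) :
    ∃ q ∈ A, q ≠ p := by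
  by_contra h
  push_neg at h
  exact hne (Set.eq_singleton_iff_unique_mem.mpr ⟨hpA, h⟩)

/-- In a convex hull thrackle on points in convex position, if at least three hulls
contain a common point `p ∈ P`, then two of them intersect exactly in `{p}`. -/
theorem three_hulls_through_point (P : Finset Pt) (𝒮 : Finset (Finset Pt))
    (hcht : CHT P 𝒮) (hconv : ConvexPos P) (p : Pt) (hp : p ∈ P)
    (S1 S2 S3 : Finset Pt) (h1 : S1 ∈ 𝒮) (h2 : S2 ∈ 𝒮) (h3 : S3 ∈ 𝒮)
    (h12 : S1 ≠ S2) (h13 : S1 ≠ S3) (h23 : S2 ≠ S3)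
    (hp1 : p ∈ hull S1) (hp2 : p ∈ hull S2) (hp3 : p ∈ hull S3) :
    hull S1 ∩ hull S2 = {p} ∨ hull S1 ∩ hull S3 = {p} ∨ hull S2 ∩ hull S3 = {p} := by
  obtain ⟨_, hsub, _, _, _, htriple⟩ := hcht
  rcases (P.erase p).eq_empty_or_nonempty with he | hne
  · -- degenerate case: P = {p}
    left
    have hP : (↑P : Set Pt) ⊆ {p} := by
      intro x hx
      by_contra hxp
      have hmem : x ∈ P.erase p := Finset.mem_erase.mpr ⟨hxp, hx⟩
      rw [he] at hmem
      exact absurd hmem (Finset.notMem_empty x)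
    have hh1 : hull S1 ⊆ {p} := by
      refine (convexHull_mono ?_).trans (le_of_eq (convexHull_singleton p))
      exact fun x hx => hP (Finset.mem_coe.mpr (hsub S1 h1 (Finset.mem_coe.mp hx)))
    apply Set.Subset.antisymm
    · exact fun x hx => hh1 hx.1
    · intro x hx
      rw [Set.mem_singleton_iff] at hx
      subst hx
      exact ⟨hp1, hp2⟩
  · obtain ⟨f, hf⟩ := extreme_sep hconv hp hne
    by_contra hcon
    push_neg at hcon
    obtain ⟨hA, hB, hC⟩ := hcon
    obtain ⟨q12, hq12, hq12p⟩ :=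
      exists_ne_of_ne_singleton (A := hull S1 ∩ hull S2) ⟨hp1, hp2⟩ hA
    obtain ⟨q13, hq13, hq13p⟩ :=
      exists_ne_of_ne_singleton (A := hull S1 ∩ hull S3) ⟨hp1, hp3⟩ hB
    obtain ⟨q23, hq23, hq23p⟩ :=
      exists_ne_of_ne_singleton (A := hull S2 ∩ hull S3) ⟨hp2, hp3⟩ hC
    have hhullP : ∀ S ∈ 𝒮, hull S ⊆ convexHull ℝ (↑P : Set Pt) := by
      intro S hS
      exact convexHull_mono (fun x hx => Finset.mem_coe.mpr (hsub S hS (Finset.mem_coe.mp hx)))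
    have hfu : 0 < f (q12 - p) := by
      rw [map_sub]
      have := hf q12 (hhullP S1 h1 hq12.1) hq12p
      linarith
    have hfv : 0 < f (q13 - p) := by
      rw [map_sub]
      have := hf q13 (hhullP S1 h1 hq13.1) hq13p
      linarith
    have hfw : 0 < f (q23 - p) := by
      rw [map_sub]
      have := hf q23 (hhullP S2 h2 hq23.1) hq23p
      linarith
    have hc1 : Convex ℝ (hull S1) := convex_convexHull ℝ _
    have hc2 : Convex ℝ (hull S2) := convex_convexHull ℝ _
    have hc3 : Convex ℝ (hull S3) := convex_convexHull ℝ _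
    have hd12 : p + (q12 - p) = q12 := by abel
    have hd13 : p + (q13 - p) = q13 := by abel
    have hd23 : p + (q23 - p) = q23 := by abel
    have hm12_1 : p + (q12 - p) ∈ hull S1 := by rw [hd12]; exact hq12.1
    have hm12_2 : p + (q12 - p) ∈ hull S2 := by rw [hd12]; exact hq12.2
    have hm13_1 : p + (q13 - p) ∈ hull S1 := by rw [hd13]; exact hq13.1
    have hm13_3 : p + (q13 - p) ∈ hull S3 := by rw [hd13]; exact hq13.2
    have hm23_2 : p + (q23 - p) ∈ hull S2 := by rw [hd23]; exact hq23.1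
    have hm23_3 : p + (q23 - p) ∈ hull S3 := by rw [hd23]; exact hq23.2
    rcases one_is_middle hfu hfv hfw with ⟨α, β, hα, hβ, hcomb⟩ | ⟨α, β, hα, hβ, hcomb⟩ |
      ⟨α, β, hα, hβ, hcomb⟩
    · -- q13 - p = α(q12-p) + β(q23-p) : middle direction lies in hull S2 too
      have hfin : (hull S1 ∩ hull S2 ∩ hull S3).Finite :=
        P.finite_toSet.subset (htriple S1 h1 S2 h2 S3 h3 h12 h13 h23)
      exact key_lemma hc1 hc2 hc3 hp1 hp2 hp3 hq13.1 hq13.2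
        hm12_2 hm23_2 hα hβ hcomb hq13p hfin
    · -- q12 - p = α(q13-p) + β(q23-p) : middle direction lies in hull S3 too
      have hfin : (hull S1 ∩ hull S3 ∩ hull S2).Finite :=
        P.finite_toSet.subset (htriple S1 h1 S3 h3 S2 h2 h13 h12 (Ne.symm h23))
      exact key_lemma hc1 hc3 hc2 hp1 hp3 hp2 hq12.1 hq12.2
        hm13_3 hm23_3 hα hβ hcomb hq12p hfin
    · -- q23 - p = α(q12-p) + β(q13-p) : middle direction lies in hull S1 too
      have hfin : (hull S2 ∩ hull S1 ∩ hull S3).Finite :=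
        P.finite_toSet.subset (htriple S2 h2 S1 h1 S3 h3 (Ne.symm h12) h23 h13)
      exact key_lemma hc2 hc1 hc3 hp2 hp1 hp3 hq23.1 hq23.2
        hm12_1 hm13_1 hα hβ hcomb hq23p hfin
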